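/- arXiv:2509.09570 — 11 statements merged into one kernel-verified Lean document; each statement's English description precedes it below -/
import Mathlib

section
/- For every m×n Boolean matrix A, the induced matching number of the bipartite graph G(A) is at most the Boolean rank of A: indmatch(G(A)) ≤ brank(A). -/
/-- `A` factors as a Boolean product of an `m × r` and an `r × n` Boolean matrix. -/
def BoolFactorization {m n : ℕ} (A : Matrix (Fin m) (Fin n) Bool) (r : ℕ) : Prop :=
  ∃ (V : Matrix (Fin m) (Fin r) Bool) (H : Matrix (Fin r) (Fin n) Bool),
    ∀ i j, A i j = true ↔ ∃ ℓ : Fin r, V i ℓ = true ∧ H ℓ j = true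

/-- The Boolean rank of a Boolean matrix. -/
noncomputable def brank {m n : ℕ} (A : Matrix (Fin m) (Fin n) Bool) : ℕ :=
  sInf {r | BoolFactorization A r}

/-- The bipartite graph on `Fin m ⊕ Fin n` whose biadjacency matrix is `A`. -/
def graphOf {m n : ℕ} (A : Matrix (Fin m) (Fin n) Bool) : SimpleGraph (Fin m ⊕ Fin n) :=
  SimpleGraph.fromRel (fun u v => ∃ i j, u = Sum.inl i ∧ v = Sum.inr j ∧ A i j = true)

/-- `M` is an induced matching of `G`: a set of edges of `G`, pairwise disjoint,
such that no edge of `G` joins endpoints of two distinct edges of `M`. -/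
def IsInducedMatching {V : Type*} (G : SimpleGraph V) (M : Finset (Sym2 V)) : Prop :=
  (↑M ⊆ G.edgeSet) ∧
  (∀ e ∈ M, ∀ f ∈ M, e ≠ f → ∀ v, v ∈ e → v ∉ f) ∧
  (∀ e ∈ M, ∀ f ∈ M, e ≠ f → ∀ u ∈ e, ∀ v ∈ f, ¬ G.Adj u v)

/-- The induced matching number of a simple graph. -/
noncomputable def indmatch {V : Type*} (G : SimpleGraph V) : ℕ :=
  sSup {s | ∃ M : Finset (Sym2 V), IsInducedMatching G M ∧ M.card = s}

lemma edge_struct {m n : ℕ} (A : Matrix (Fin m) (Fin n) Bool) (e : Sym2 (Fin m ⊕ Fin n))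
    (he : e ∈ (graphOf A).edgeSet) :
    ∃ i j, A i j = true ∧ Sum.inl i ∈ e ∧ Sum.inr j ∈ e := by
  induction e using Sym2.ind with
  | _ u v =>
    rw [SimpleGraph.mem_edgeSet, graphOf, SimpleGraph.fromRel_adj] at he
    rcases he with ⟨-, ⟨i, j, rfl, rfl, hA⟩ | ⟨i, j, rfl, rfl, hA⟩⟩
    · exact ⟨i, j, hA, by simp, by simp⟩
    · exact ⟨i, j, hA, by simp, by simp⟩

lemma matching_card_le {m n r : ℕ} (A : Matrix (Fin m) (Fin n) Bool)
    (hr : BoolFactorization A r) (M : Finset (Sym2 (Fin m ⊕ Fin n)))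
    (hM : IsInducedMatching (graphOf A) M) : M.card ≤ r := by
  obtain ⟨V, H, hVH⟩ := hr
  obtain ⟨hsub, hdisj, hind⟩ := hM
  have key : ∀ e ∈ M, ∃ ℓ : Fin r, ∃ i j, Sum.inl i ∈ e ∧ Sum.inr j ∈ e ∧
      V i ℓ = true ∧ H ℓ j = true := by
    intro e he
    obtain ⟨i, j, hA, hi, hj⟩ := edge_struct A e (hsub he)
    obtain ⟨ℓ, hV, hH⟩ := (hVH i j).mp hA
    exact ⟨ℓ, i, j, hi, hj, hV, hH⟩
  classical
  rcases Nat.eq_zero_or_pos r with rfl | hrpos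
  · rcases Finset.eq_empty_or_nonempty M with rfl | ⟨e, he⟩
    · simp
    · obtain ⟨ℓ, -⟩ := key e he
      exact absurd ℓ.2 (by omega)
  · have : Nonempty (Fin r) := ⟨⟨0, hrpos⟩⟩
    have hcard : M.card ≤ (Finset.univ : Finset (Fin r)).card := by
      apply Finset.card_le_card_of_injOn
        (fun e => if h : e ∈ M then (key e h).choose else Classical.arbitrary _)
      · intro e _; simp
      · intro e he f hf hef
        simp only [Finset.mem_coe] at he hf
        by_contra hne
        simp only [dif_pos he, dif_pos hf] at hef
        obtain ⟨i, j, hi, hj, hV, hH⟩ := (key e he).choose_spec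
        obtain ⟨i', j', hi', hj', hV', hH'⟩ := (key f hf).choose_spec
        rw [hef] at hV
        have hA : A i j' = true := (hVH i j').mpr ⟨_, hV, hH'⟩
        have hadj : (graphOf A).Adj (Sum.inl i) (Sum.inr j') := by
          rw [graphOf, SimpleGraph.fromRel_adj]
          exact ⟨by simp, Or.inl ⟨i, j', rfl, rfl, hA⟩⟩
        exact hind e he f hf hne _ hi _ hj' hadj
    simpa using hcard

theorem indmatch_le_brank (m n : ℕ) (A : Matrix (Fin m) (Fin n) Bool) :
    indmatch (graphOf A) ≤ brank A := by
  have hne : {r | BoolFactorization A r}.Nonempty := by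
    refine ⟨m, Matrix.of (fun i ℓ => decide (i = ℓ)), A, fun i j => ?_⟩
    constructor
    · intro h; exact ⟨i, by simp, h⟩
    · rintro ⟨ℓ, hV, hH⟩
      simp only [Matrix.of_apply, decide_eq_true_eq] at hV
      rwa [hV]
  have hbr : BoolFactorization A (brank A) := Nat.sInf_mem hne
  apply csSup_le
  · exact ⟨0, ∅, ⟨by simp, by simp, by simp⟩, by simp⟩
  · rintro s ⟨M, hM, rfl⟩
    exact matching_card_le A hbr M hM
end

section
/- Let A be an m×n Boolean matrix, k a field, and (i,j), (k,ℓ) two distinct positions in Fin m × Fin n. Then (i,j) and (k,ℓ) form an isolated pair of A if and only if the monomial X (i,j) · X (k,ℓ) belongs to the determinantal ideal I_2(A[x]). -/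
/-- The positions `p` and `q` form an isolated pair of ones of `A`. -/
def IsolatedPair {m n : ℕ} (A : Matrix (Fin m) (Fin n) Bool) (p q : Fin m × Fin n) : Prop :=
  A p.1 p.2 = true ∧ A q.1 q.2 = true ∧ ¬(A p.1 q.2 = true ∧ A q.1 p.2 = true)

/-- The generic matrix `A[x]`: the `(i,j)` entry is the variable `X (i,j)` if
`A i j = true` and `0` otherwise. -/
noncomputable def AX {m n : ℕ} (k : Type*) [Field k] (A : Matrix (Fin m) (Fin n) Bool) :
    Matrix (Fin m) (Fin n) (MvPolynomial (Fin m × Fin n) k) :=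
  Matrix.of fun i j => if A i j = true then MvPolynomial.X (i, j) else 0

/-- The `t`-th determinantal ideal of `A[x]`, generated by the determinants of all
`t × t` submatrices of `A[x]`. -/
noncomputable def detIdeal {m n : ℕ} (k : Type*) [Field k]
    (A : Matrix (Fin m) (Fin n) Bool) (t : ℕ) : Ideal (MvPolynomial (Fin m × Fin n) k) :=
  Ideal.span {f | ∃ (ρ : Fin t → Fin m) (γ : Fin t → Fin n),
    Function.Injective ρ ∧ Function.Injective γ ∧
    f = (Matrix.of fun a b => AX k A (ρ a) (γ b)).det}

theorem isolatedPair_iff_mem_detIdeal (m n : ℕ) (A : Matrix (Fin m) (Fin n) Bool)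
    (k : Type*) [Field k] (p q : Fin m × Fin n) (hpq : p ≠ q) :
    IsolatedPair A p q ↔ MvPolynomial.X p * MvPolynomial.X q ∈ detIdeal k A 2 := by
  constructor
  · rintro ⟨h1, h2, h3⟩
    have hr : p.1 ≠ q.1 := by
      intro h
      exact h3 ⟨by rw [h]; exact h2, by rw [← h]; exact h1⟩
    have hc : p.2 ≠ q.2 := by
      intro h
      exact h3 ⟨by rw [← h]; exact h1, by rw [h]; exact h2⟩
    apply Ideal.subset_span
    refine ⟨![p.1, q.1], ![p.2, q.2], ?_, ?_, ?_⟩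
    · intro a b hab
      fin_cases a <;> fin_cases b <;> simp_all
    · intro a b hab
      fin_cases a <;> fin_cases b <;> simp_all
    · rw [Matrix.det_fin_two]
      simp only [Matrix.of_apply, Matrix.cons_val_zero, Matrix.cons_val_one, Matrix.head_cons, AX]
      simp only [h1, h2, if_true]
      rcases not_and_or.mp h3 with h | h
      · simp [h]
      · simp [h]
  · intro hmem
    -- Key: any evaluation killing all the 2×2 minors of the masked matrix kills `X p * X q`.
    have key : ∀ v : Fin m × Fin n → k,
        (∀ (ρ : Fin 2 → Fin m) (γ : Fin 2 → Fin n), Function.Injective ρ →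
          Function.Injective γ →
          (if A (ρ 0) (γ 0) = true then v (ρ 0, γ 0) else 0)
            * (if A (ρ 1) (γ 1) = true then v (ρ 1, γ 1) else 0)
          - (if A (ρ 0) (γ 1) = true then v (ρ 0, γ 1) else 0)
            * (if A (ρ 1) (γ 0) = true then v (ρ 1, γ 0) else 0) = 0) →
        v p * v q = 0 := by
      intro v hv
      have hker : detIdeal k A 2 ≤ RingHom.ker (MvPolynomial.eval v) := by
        rw [detIdeal, Ideal.span_le]
        rintro f ⟨ρ, γ, hρ, hγ, rfl⟩
        simp only [SetLike.mem_coe, RingHom.mem_ker]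
        rw [RingHom.map_det, Matrix.det_fin_two]
        simp only [RingHom.mapMatrix_apply]
        have e : ∀ a b, ((Matrix.of fun a b => AX k A (ρ a) (γ b)).map
            (MvPolynomial.eval v)) a b
            = if A (ρ a) (γ b) = true then v (ρ a, γ b) else 0 := by
          intro a b
          simp [Matrix.map_apply, AX, apply_ite (MvPolynomial.eval v)]
        rw [e, e, e, e]
        exact hv ρ γ hρ hγ
      have := hker hmem
      simpa [RingHom.mem_ker] using this
    -- If (after masking) `v` is supported at a single point, then `v p * v q = 0`.
    have one_pt : ∀ (v : Fin m × Fin n → k) (z₀ : Fin m × Fin n),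
        (∀ z : Fin m × Fin n, A z.1 z.2 = true → v z ≠ 0 → z = z₀) → v p * v q = 0 := by
      intro v z₀ hz₀
      apply key
      intro ρ γ hρ hγ
      have hne : ρ 0 ≠ ρ 1 := fun h => absurd (hρ h) (by decide)
      have hf : ∀ (i : Fin m) (j : Fin n),
          (if A i j = true then v (i, j) else 0) ≠ 0 → ((i, j) : Fin m × Fin n) = z₀ := by
        intro i j hij
        by_cases hA : A i j = true
        · rw [if_pos hA] at hij
          exact hz₀ (i, j) hA hij
        · rw [if_neg hA] at hij
          exact absurd rfl hij
      have hprod : ∀ (j j' : Fin n),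
          (if A (ρ 0) j = true then v (ρ 0, j) else 0)
            * (if A (ρ 1) j' = true then v (ρ 1, j') else 0) = 0 := by
        intro j j'
        by_cases h0 : (if A (ρ 0) j = true then v (ρ 0, j) else 0) = 0
        · rw [h0, zero_mul]
        · by_cases h1 : (if A (ρ 1) j' = true then v (ρ 1, j') else 0) = 0
          · rw [h1, mul_zero]
          · exfalso
            apply hne
            have e0 := hf _ _ h0
            have e1 := hf _ _ h1
            have : ((ρ 0, j) : Fin m × Fin n) = (ρ 1, j') := e0.trans e1.symm
            exact (Prod.mk.injEq _ _ _ _ ▸ this).1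
      rw [hprod, hprod, sub_zero]
    -- A p.1 p.2 = true
    have hAp : A p.1 p.2 = true := by
      by_contra hAp
      have := one_pt (fun z => if z = p ∨ z = q then (1:k) else 0) q ?_
      · simp at this
      · intro z hA hz
        have hz' : z = p ∨ z = q := by
          by_contra h
          simp [h] at hz
        rcases hz' with rfl | rfl
        · exact absurd hA hAp
        · rfl
    have hAq : A q.1 q.2 = true := by
      by_contra hAq
      have := one_pt (fun z => if z = p ∨ z = q then (1:k) else 0) p ?_
      · simp at this
      · intro z hA hz
        have hz' : z = p ∨ z = q := by
          by_contra h
          simp [h] at hz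
        rcases hz' with rfl | rfl
        · rfl
        · exact absurd hA hAq
    refine ⟨hAp, hAq, ?_⟩
    rintro ⟨hc1, hc2⟩
    -- rank-one evaluation supported on the 2×2 block
    set u : Fin m → k := fun i => if i = p.1 ∨ i = q.1 then 1 else 0 with hu
    set w : Fin n → k := fun j => if j = p.2 ∨ j = q.2 then 1 else 0 with hw
    have hval := key (fun z => u z.1 * w z.2) ?_
    · simp [hu, hw] at hval
    · intro ρ γ hρ hγ
      have he : ∀ (i : Fin m) (j : Fin n),
          (if A i j = true then u i * w j else 0) = u i * w j := by
        intro i j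
        by_cases hA : A i j = true
        · rw [if_pos hA]
        · rw [if_neg hA]
          by_cases hi : i = p.1 ∨ i = q.1
          · by_cases hj : j = p.2 ∨ j = q.2
            · exfalso
              apply hA
              rcases hi with rfl | rfl <;> rcases hj with rfl | rfl <;> assumption
            · simp [hw, hj]
          · simp [hu, hi]
      rw [he, he, he, he]
      ring
end

section
/- Let A be an m×n Boolean matrix, k a field, and s ≥ 1. Let (i_1,j_1), …, (i_s,j_s) be positions with i_1, …, i_s pairwise distinct and j_1, …, j_s pairwise distinct. If the squarefree monomial X (i_1,j_1) ⋯ X (i_s,j_s) belongs to the determinantal ideal I_s(A[x]), then this monomial is equal to the determinant of the s×s matrix whose (a,b) entry is A[x] (i_a) (j_b). -/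
lemma aux_exists_perm {s : ℕ} {α : Type*} {i ρ : Fin s → α}
    (hi : Function.Injective i) (hρ : Function.Injective ρ)
    (h : ∀ a, ρ a ∈ Set.range i) : ∃ σ : Equiv.Perm (Fin s), ∀ a, ρ a = i (σ a) := by
  choose σ hσ using h
  have hinj : Function.Injective σ := fun a b hab => hρ (by rw [← hσ, ← hσ, hab])
  exact ⟨Equiv.ofBijective σ (Finite.injective_iff_bijective.mp hinj), fun a => (hσ a).symm⟩

lemma aux_det_homog {s : ℕ} {σ : Type*} {k : Type*} [CommRing k]
    (N : Matrix (Fin s) (Fin s) (MvPolynomial σ k))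
    (hN : ∀ a b, (N a b).IsHomogeneous 1) : N.det.IsHomogeneous s := by
  rw [Matrix.det_apply']
  apply MvPolynomial.IsHomogeneous.sum
  intro σ' _
  have h0 : (((Equiv.Perm.sign σ' : ℤ) : MvPolynomial σ k)).IsHomogeneous 0 := by
    rw [← map_intCast (MvPolynomial.C : k →+* MvPolynomial σ k)]
    exact MvPolynomial.isHomogeneous_C _ _
  have hp : (∏ a, N (σ' a) a).IsHomogeneous s := by
    have := MvPolynomial.IsHomogeneous.prod Finset.univ (fun a => N (σ' a) a)
      (fun _ => 1) (fun a _ => hN _ _)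
    simpa using this
  simpa using h0.mul hp

theorem monomial_mem_detIdeal_eq_det (m n s : ℕ) (hs : 1 ≤ s)
    (A : Matrix (Fin m) (Fin n) Bool) (k : Type*) [Field k]
    (i : Fin s → Fin m) (j : Fin s → Fin n)
    (hi : Function.Injective i) (hj : Function.Injective j)
    (h : (∏ a : Fin s, MvPolynomial.X (i a, j a) : MvPolynomial (Fin m × Fin n) k)
      ∈ detIdeal k A s) :
    (∏ a : Fin s, MvPolynomial.X (i a, j a) : MvPolynomial (Fin m × Fin n) k)
      = (Matrix.of fun a b => AX k A (i a) (j b)).det := by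
  classical
  have hAX : ∀ (p : Fin m) (q' : Fin n),
      AX k A p q' = if A p q' = true then MvPolynomial.X (p, q') else 0 := fun _ _ => rfl
  set M : MvPolynomial (Fin m × Fin n) k := ∏ a : Fin s, MvPolynomial.X (i a, j a) with hM
  set D : MvPolynomial (Fin m × Fin n) k :=
    (Matrix.of fun a b => AX k A (i a) (j b)).det with hD
  have hMne : M ≠ 0 := by
    rw [hM]
    exact Finset.prod_ne_zero_iff.mpr fun a _ => MvPolynomial.X_ne_zero _
  have hMhom : M.IsHomogeneous s := by
    have := MvPolynomial.IsHomogeneous.prod Finset.univ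
      (fun a : Fin s => (MvPolynomial.X (i a, j a) : MvPolynomial (Fin m × Fin n) k))
      (fun _ => 1) (fun a _ => MvPolynomial.isHomogeneous_X _ _)
    simpa using this
  have hDhom : D.IsHomogeneous s := by
    apply aux_det_homog
    intro a b
    show (if A (i a) (j b) = true then
      (MvPolynomial.X (i a, j b) : MvPolynomial (Fin m × Fin n) k) else 0).IsHomogeneous 1
    split
    · exact MvPolynomial.isHomogeneous_X _ _
    · exact MvPolynomial.isHomogeneous_zero _ _ _
  -- Step A : M ∈ span {D}
  set g : Fin m × Fin n → MvPolynomial (Fin m × Fin n) k := fun p =>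
    if p.1 ∈ Set.range i ∧ p.2 ∈ Set.range j then MvPolynomial.X p else 0 with hg
  have hMD : M ∈ Ideal.span {D} := by
    have hψM : MvPolynomial.aeval g M = M := by
      rw [hM, map_prod]
      refine Finset.prod_congr rfl fun a _ => ?_
      rw [MvPolynomial.aeval_X]
      simp only [hg]
      exact if_pos ⟨⟨a, rfl⟩, ⟨a, rfl⟩⟩
    have h2 : MvPolynomial.aeval g M ∈
        Ideal.map (MvPolynomial.aeval g) (detIdeal k A s) := Ideal.mem_map_of_mem _ h
    rw [hψM] at h2
    have h3 : Ideal.map (MvPolynomial.aeval g) (detIdeal k A s) ≤ Ideal.span {D} := by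
      unfold detIdeal
      rw [Ideal.map_span]
      refine Ideal.span_le.mpr ?_
      rintro _ ⟨f, ⟨ρ, γ, hρ, hγ, rfl⟩, rfl⟩
      rw [AlgHom.map_det, AlgHom.mapMatrix_apply]
      by_cases hri : ∀ a, ρ a ∈ Set.range i
      · by_cases hrj : ∀ b, γ b ∈ Set.range j
        · obtain ⟨σ, hσ⟩ := aux_exists_perm hi hρ hri
          obtain ⟨τ, hτ⟩ := aux_exists_perm hj hγ hrj
          have hfixentry : ∀ (p : Fin m) (q' : Fin n), p ∈ Set.range i → q' ∈ Set.range j →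
              MvPolynomial.aeval g (AX k A p q') = AX k A p q' := by
            intro p q' hp hq
            rw [hAX]
            by_cases hA : A p q' = true
            · rw [if_pos hA, MvPolynomial.aeval_X]
              simp only [hg]
              exact if_pos ⟨hp, hq⟩
            · rw [if_neg hA, map_zero]
          have hfix : (Matrix.of fun a b => AX k A (ρ a) (γ b)).map (MvPolynomial.aeval g)
              = (Matrix.of fun a b => AX k A (i a) (j b)).submatrix σ τ := by
            refine Matrix.ext fun a b => ?_
            show MvPolynomial.aeval g (AX k A (ρ a) (γ b)) = AX k A (i (σ a)) (j (τ b))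
            rw [hσ a, hτ b]
            exact hfixentry _ _ ⟨σ a, rfl⟩ ⟨τ b, rfl⟩
          rw [hfix]
          have hsub : (Matrix.of fun a b => AX k A (i a) (j b)).submatrix σ τ
              = (((Matrix.of fun a b => AX k A (i a) (j b)).submatrix id τ).submatrix σ id) := by
            rw [Matrix.submatrix_submatrix]
            simp
          rw [hsub, Matrix.det_permute, Matrix.det_permute']
          exact Ideal.mem_span_singleton.mpr
            ⟨((Equiv.Perm.sign σ : ℤ) : MvPolynomial (Fin m × Fin n) k) *
              ((Equiv.Perm.sign τ : ℤ) : MvPolynomial (Fin m × Fin n) k), by push_cast; ring⟩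
        · push_neg at hrj
          obtain ⟨b, hb⟩ := hrj
          rw [Matrix.det_eq_zero_of_column_eq_zero b ?_]
          · exact Ideal.zero_mem _
          intro a
          show MvPolynomial.aeval g (AX k A (ρ a) (γ b)) = 0
          rw [hAX]
          by_cases hA : A (ρ a) (γ b) = true
          · rw [if_pos hA, MvPolynomial.aeval_X]
            simp only [hg]
            exact if_neg fun hcon => hb hcon.2
          · rw [if_neg hA, map_zero]
      · push_neg at hri
        obtain ⟨a, ha⟩ := hri
        rw [Matrix.det_eq_zero_of_row_eq_zero a ?_]
        · exact Ideal.zero_mem _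
        intro b
        show MvPolynomial.aeval g (AX k A (ρ a) (γ b)) = 0
        rw [hAX]
        by_cases hA : A (ρ a) (γ b) = true
        · rw [if_pos hA, MvPolynomial.aeval_X]
          simp only [hg]
          exact if_neg fun hcon => ha hcon.1
        · rw [if_neg hA, map_zero]
    exact h3 h2
  -- Step B : M = q * D
  obtain ⟨q, hq⟩ := Ideal.mem_span_singleton'.mp hMD
  -- Step C : M = C c * D
  have hqD : M = MvPolynomial.C (MvPolynomial.coeff 0 q) * D := by
    have e1 : MvPolynomial.homogeneousComponent s M = M := by
      rw [MvPolynomial.homogeneousComponent_of_mem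
        ((MvPolynomial.mem_homogeneousSubmodule _ _).mpr hMhom), if_pos rfl]
    calc M = MvPolynomial.homogeneousComponent s (q * D) := by rw [hq, e1]
    _ = ∑ d ∈ Finset.range (q.totalDegree + 1),
          MvPolynomial.homogeneousComponent s (MvPolynomial.homogeneousComponent d q * D) := by
        conv_lhs => rw [← MvPolynomial.sum_homogeneousComponent q]
        rw [Finset.sum_mul, map_sum]
    _ = MvPolynomial.C (MvPolynomial.coeff 0 q) * D := by
        refine (Finset.sum_eq_single 0 ?_ ?_).trans ?_
        · intro d _ hd
          rw [MvPolynomial.homogeneousComponent_of_mem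
            ((MvPolynomial.mem_homogeneousSubmodule _ _).mpr
              ((MvPolynomial.homogeneousComponent_isHomogeneous d q).mul hDhom)),
            if_neg (by omega)]
        · intro h0
          exact absurd (Finset.mem_range.mpr (Nat.succ_pos _)) h0
        · rw [MvPolynomial.homogeneousComponent_of_mem
            ((MvPolynomial.mem_homogeneousSubmodule _ _).mpr
              ((MvPolynomial.homogeneousComponent_isHomogeneous 0 q).mul hDhom)),
            if_pos (zero_add s).symm, MvPolynomial.homogeneousComponent_zero]
  -- Step D : specialize to the diagonal
  set g2 : Fin m × Fin n → MvPolynomial (Fin m × Fin n) k := fun p =>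
    if ∃ a, (i a, j a) = p then MvPolynomial.X p else 0 with hg2
  have hφM : MvPolynomial.aeval g2 M = M := by
    rw [hM, map_prod]
    refine Finset.prod_congr rfl fun a _ => ?_
    rw [MvPolynomial.aeval_X]
    simp only [hg2]
    exact if_pos ⟨a, rfl⟩
  have hφD : MvPolynomial.aeval g2 D = ∏ a : Fin s,
      (if A (i a) (j a) = true then
        (MvPolynomial.X (i a, j a) : MvPolynomial (Fin m × Fin n) k) else 0) := by
    rw [hD, AlgHom.map_det, AlgHom.mapMatrix_apply]
    have hdiag : (Matrix.of fun a b => AX k A (i a) (j b)).map (MvPolynomial.aeval g2) =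
        Matrix.diagonal (fun a =>
          if A (i a) (j a) = true then MvPolynomial.X (i a, j a) else 0) := by
      refine Matrix.ext fun a b => ?_
      show MvPolynomial.aeval g2 (AX k A (i a) (j b)) = _
      rw [hAX]
      by_cases hab : a = b
      · subst hab
        rw [Matrix.diagonal_apply_eq]
        by_cases hA : A (i a) (j a) = true
        · rw [if_pos hA, MvPolynomial.aeval_X]
          simp only [hg2]
          exact if_pos ⟨a, rfl⟩
        · rw [if_neg hA, map_zero]
      · rw [Matrix.diagonal_apply_ne _ hab]
        by_cases hA : A (i a) (j b) = true
        · rw [if_pos hA, MvPolynomial.aeval_X]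
          simp only [hg2]
          refine if_neg ?_
          rintro ⟨c, hc⟩
          have h1 : i c = i a := congrArg Prod.fst hc
          have h2 : j c = j b := congrArg Prod.snd hc
          exact hab ((hi h1) ▸ (hj h2))
        · rw [if_neg hA, map_zero]
    rw [hdiag, Matrix.det_diagonal]
  have hMeq : M = MvPolynomial.C (MvPolynomial.coeff 0 q) * MvPolynomial.aeval g2 D := by
    conv_lhs => rw [← hφM, hqD]
    rw [map_mul, MvPolynomial.aeval_C, MvPolynomial.algebraMap_eq]
  by_cases hall : ∀ a : Fin s, A (i a) (j a) = true
  · have hprod : (∏ a : Fin s,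
        (if A (i a) (j a) = true then
          (MvPolynomial.X (i a, j a) : MvPolynomial (Fin m × Fin n) k) else 0)) = M :=
      Finset.prod_congr rfl fun a _ => if_pos (hall a)
    have hcc : M = MvPolynomial.C (MvPolynomial.coeff 0 q) * M := by
      conv_lhs => rw [hMeq]
      rw [hφD, hprod]
    have hC1 : MvPolynomial.C (MvPolynomial.coeff 0 q) = 1 :=
      mul_right_cancel₀ hMne (by rw [one_mul]; exact hcc.symm)
    rw [hqD, hC1, one_mul]
  · push_neg at hall
    obtain ⟨a, ha⟩ := hall
    exfalso
    apply hMne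
    have hz : (∏ a : Fin s,
        (if A (i a) (j a) = true then
          (MvPolynomial.X (i a, j a) : MvPolynomial (Fin m × Fin n) k) else 0)) = 0 :=
      Finset.prod_eq_zero (Finset.mem_univ a) (if_neg ha)
    rw [hMeq, hφD, hz, mul_zero]
end

section
/- Let A be an m×n Boolean matrix, k a field, and s ≥ 2. Let (i_1,j_1), …, (i_s,j_s) be positions with i_1, …, i_s pairwise distinct and j_1, …, j_s pairwise distinct. If the squarefree monomial X (i_1,j_1) ⋯ X (i_s,j_s) belongs to the determinantal ideal I_s(A[x]), then {(i_1,j_1), …, (i_s,j_s)} is an isolated set of A. -/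
/-- `T` is a set of ones of `A` that are pairwise isolated. -/
def IsIsolatedSet {m n : ℕ} (A : Matrix (Fin m) (Fin n) Bool)
    (T : Finset (Fin m × Fin n)) : Prop :=
  (∀ p ∈ T, A p.1 p.2 = true) ∧ ∀ p ∈ T, ∀ q ∈ T, p ≠ q → IsolatedPair A p q

lemma eval_mem_detIdeal {m n s : ℕ} {A : Matrix (Fin m) (Fin n) Bool} {k : Type*} [Field k]
    {f : MvPolynomial (Fin m × Fin n) k} (hf : f ∈ detIdeal k A s)
    (v : Fin m × Fin n → k)
    (hv : ∀ (ρ : Fin s → Fin m) (γ : Fin s → Fin n), Function.Injective ρ →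
      Function.Injective γ →
      (Matrix.of fun a b => MvPolynomial.eval v (AX k A (ρ a) (γ b))).det = 0) :
    MvPolynomial.eval v f = 0 := by
  have h1 : MvPolynomial.eval v f ∈ Ideal.map (MvPolynomial.eval v) (detIdeal k A s) :=
    Ideal.mem_map_of_mem _ hf
  rw [detIdeal, Ideal.map_span] at h1
  have h2 : Ideal.span ((MvPolynomial.eval v) ''
      {f | ∃ (ρ : Fin s → Fin m) (γ : Fin s → Fin n),
      Function.Injective ρ ∧ Function.Injective γ ∧
      f = (Matrix.of fun a b => AX k A (ρ a) (γ b)).det}) ≤ ⊥ := by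
    rw [Ideal.span_le]
    rintro x ⟨g, ⟨ρ, γ, hρ, hγ, rfl⟩, rfl⟩
    have hzero := hv ρ γ hρ hγ
    simp only [SetLike.mem_coe, Ideal.mem_bot, RingHom.map_det]
    exact hzero
  simpa using h2 h1

lemma det_zero_aux {m n s : ℕ} {k : Type*} [Field k]
    (B : Matrix (Fin m) (Fin n) k) (i : Fin s → Fin m)
    (hsupp : ∀ r c, B r c ≠ 0 → ∃ a, r = i a)
    (hbad : (∃ a0, ∀ c, B (i a0) c = 0) ∨
            (∃ a b : Fin s, i a ≠ i b ∧ ∀ c, B (i a) c = B (i b) c))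
    (ρ : Fin s → Fin m) (γ : Fin s → Fin n) (hρ : Function.Injective ρ) :
    (Matrix.of fun a b => B (ρ a) (γ b)).det = 0 := by
  by_cases hall : ∀ a, ∃ c, ρ a = i c
  · choose σ hσ using hall
    have hσinj : Function.Injective σ := fun a b hab => hρ (by rw [hσ, hσ, hab])
    have hσsurj : Function.Surjective σ := Finite.injective_iff_surjective.mp hσinj
    rcases hbad with ⟨a0, h0⟩ | ⟨a, b, hab, heq⟩
    · obtain ⟨a1, ha1⟩ := hσsurj a0
      apply Matrix.det_eq_zero_of_row_eq_zero a1
      intro c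
      simp only [Matrix.of_apply]
      rw [hσ a1, ha1]
      exact h0 _
    · obtain ⟨a1, ha1⟩ := hσsurj a
      obtain ⟨a2, ha2⟩ := hσsurj b
      have h12 : a1 ≠ a2 := by
        rintro rfl
        exact hab (by rw [← ha1, ← ha2])
      apply Matrix.det_zero_of_row_eq h12
      funext c
      simp only [Matrix.of_apply]
      rw [hσ a1, hσ a2, ha1, ha2]
      exact heq _
  · push_neg at hall
    obtain ⟨a, ha⟩ := hall
    apply Matrix.det_eq_zero_of_row_eq_zero a
    intro c
    by_contra hc
    obtain ⟨a', ha'⟩ := hsupp _ _ hc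
    exact ha a' ha'
lemma AX_eval {m n : ℕ} {k : Type*} [Field k] (A : Matrix (Fin m) (Fin n) Bool)
    (v : Fin m × Fin n → k) (r : Fin m) (c : Fin n) :
    MvPolynomial.eval v (AX k A r c) = if A r c = true then v (r, c) else 0 := by
  simp only [AX, Matrix.of_apply]
  split <;> simp

theorem monomial_mem_detIdeal_isolatedSet (m n s : ℕ) (hs : 2 ≤ s)
    (A : Matrix (Fin m) (Fin n) Bool) (k : Type*) [Field k]
    (i : Fin s → Fin m) (j : Fin s → Fin n)
    (hi : Function.Injective i) (hj : Function.Injective j)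
    (h : (∏ a : Fin s, MvPolynomial.X (i a, j a) : MvPolynomial (Fin m × Fin n) k)
      ∈ detIdeal k A s) :
    IsIsolatedSet A (Finset.image (fun a => (i a, j a)) Finset.univ) := by
  classical
  have hdiag : ∀ a : Fin s, A (i a) (j a) = true := by
    by_contra hcon
    push_neg at hcon
    obtain ⟨a0, ha0⟩ := hcon
    set v : Fin m × Fin n → k := fun p => if ∃ c, p = (i c, j c) then 1 else 0 with hvdef
    have hev : MvPolynomial.eval v
        (∏ a : Fin s, MvPolynomial.X (i a, j a) : MvPolynomial (Fin m × Fin n) k) = 0 := by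
      apply eval_mem_detIdeal h v
      intro ρ γ hρ hγ
      apply det_zero_aux (Matrix.of fun r c => MvPolynomial.eval v (AX k A r c)) i _ _ ρ γ hρ
      · intro r c hne
        rw [Matrix.of_apply, AX_eval] at hne
        by_contra hno
        push_neg at hno
        apply hne
        split
        · rw [hvdef]
          simp only
          rw [if_neg]
          rintro ⟨c', hc'⟩
          exact hno c' (congrArg Prod.fst hc')
        · rfl
      · left
        refine ⟨a0, fun c => ?_⟩
        rw [Matrix.of_apply, AX_eval]
        split
        · rename_i hA
          rw [hvdef]
          simp only
          rw [if_neg]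
          rintro ⟨c', hc'⟩
          rw [Prod.mk.injEq] at hc'
          obtain ⟨h1, h2⟩ := hc'
          have : c' = a0 := hi h1.symm
          subst this
          subst h2
          exact ha0 hA
        · rfl
    rw [map_prod] at hev
    simp only [MvPolynomial.eval_X] at hev
    have hv1 : ∀ a : Fin s, v (i a, j a) = 1 := fun a => if_pos ⟨a, rfl⟩
    rw [Finset.prod_congr rfl (fun a _ => hv1 a)] at hev
    simp at hev
  constructor
  · rintro p hp
    rw [Finset.mem_image] at hp
    obtain ⟨a, -, rfl⟩ := hp
    exact hdiag a
  · rintro p hp q hq hpq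
    rw [Finset.mem_image] at hp hq
    obtain ⟨a, -, rfl⟩ := hp
    obtain ⟨b, -, rfl⟩ := hq
    have hab : a ≠ b := fun hh => hpq (by rw [hh])
    refine ⟨hdiag a, hdiag b, ?_⟩
    rintro ⟨hab1, hab2⟩
    dsimp only at hab1 hab2
    set v : Fin m × Fin n → k := fun p =>
      if (∃ c, p = (i c, j c)) ∨ p = (i a, j b) ∨ p = (i b, j a) then 1 else 0 with hvdef
    have hrowa : ∀ c, (if A (i a) c = true then v (i a, c) else 0)
        = if c = j a ∨ c = j b then 1 else 0 := by
      intro c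
      by_cases hc : c = j a ∨ c = j b
      · rw [if_pos hc]
        rcases hc with rfl | rfl
        · rw [if_pos (hdiag a)]
          exact if_pos (Or.inl ⟨a, rfl⟩)
        · rw [if_pos hab1]
          exact if_pos (Or.inr (Or.inl rfl))
      · rw [if_neg hc]
        split
        · rw [hvdef]
          simp only
          rw [if_neg]
          rintro (⟨c', hc'⟩ | hc' | hc')
          · rw [Prod.mk.injEq] at hc'
            obtain ⟨h1, h2⟩ := hc'
            have : a = c' := hi h1
            subst this
            exact hc (Or.inl h2)
          · rw [Prod.mk.injEq] at hc'
            exact hc (Or.inr hc'.2)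
          · rw [Prod.mk.injEq] at hc'
            exact hab (hi hc'.1)
        · rfl
    have hrowb : ∀ c, (if A (i b) c = true then v (i b, c) else 0)
        = if c = j b ∨ c = j a then 1 else 0 := by
      intro c
      by_cases hc : c = j b ∨ c = j a
      · rw [if_pos hc]
        rcases hc with rfl | rfl
        · rw [if_pos (hdiag b)]
          exact if_pos (Or.inl ⟨b, rfl⟩)
        · rw [if_pos hab2]
          exact if_pos (Or.inr (Or.inr rfl))
      · rw [if_neg hc]
        split
        · rw [hvdef]
          simp only
          rw [if_neg]
          rintro (⟨c', hc'⟩ | hc' | hc')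
          · rw [Prod.mk.injEq] at hc'
            obtain ⟨h1, h2⟩ := hc'
            have : b = c' := hi h1
            subst this
            exact hc (Or.inl h2)
          · rw [Prod.mk.injEq] at hc'
            exact hab (hi hc'.1.symm)
          · rw [Prod.mk.injEq] at hc'
            exact hc (Or.inr hc'.2)
        · rfl
    have hev : MvPolynomial.eval v
        (∏ a : Fin s, MvPolynomial.X (i a, j a) : MvPolynomial (Fin m × Fin n) k) = 0 := by
      apply eval_mem_detIdeal h v
      intro ρ γ hρ hγ
      apply det_zero_aux (Matrix.of fun r c => MvPolynomial.eval v (AX k A r c)) i _ _ ρ γ hρ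
      · intro r c hne
        rw [Matrix.of_apply, AX_eval] at hne
        by_contra hno
        push_neg at hno
        apply hne
        split
        · rw [hvdef]
          simp only
          rw [if_neg]
          rintro (⟨c', hc'⟩ | hc' | hc')
          · exact hno c' (congrArg Prod.fst hc')
          · exact hno a (congrArg Prod.fst hc')
          · exact hno b (congrArg Prod.fst hc')
        · rfl
      · right
        refine ⟨a, b, fun hh => hab (hi hh), fun c => ?_⟩
        rw [Matrix.of_apply, Matrix.of_apply, AX_eval, AX_eval, hrowa c, hrowb c]
        exact if_congr or_comm rfl rfl
    rw [map_prod] at hev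
    simp only [MvPolynomial.eval_X] at hev
    have hv1 : ∀ a : Fin s, v (i a, j a) = 1 := fun a => if_pos (Or.inl ⟨a, rfl⟩)
    rw [Finset.prod_congr rfl (fun a _ => hv1 a)] at hev
    simp at hev
end

section
/- Let A be an m×n Boolean matrix and k a field. A finite subset T ⊆ S(A) satisfies ∏_{p ∈ T} X p ∉ J_A if and only if T is an isolated set of A. -/
/-- The support of `A`: the positions at which `A` is `true`. -/
abbrev Supp {m n : ℕ} (A : Matrix (Fin m) (Fin n) Bool) : Type :=
  {p : Fin m × Fin n // A p.1 p.2 = true}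

/-- A finite subset of the support of `A` is an isolated set if its elements are
pairwise isolated. -/
def IsIsolatedSubset {m n : ℕ} (A : Matrix (Fin m) (Fin n) Bool)
    (T : Finset (Supp A)) : Prop :=
  ∀ p ∈ T, ∀ q ∈ T, p ≠ q → IsolatedPair A p.1 q.1

/-- The isolation ideal `J_A` of `A`: the Stanley–Reisner ideal of the isolation
complex together with the squares of all the variables. -/
noncomputable def isolationIdeal {m n : ℕ} (k : Type*) [Field k]
    (A : Matrix (Fin m) (Fin n) Bool) : Ideal (MvPolynomial (Supp A) k) :=
  Ideal.span ({f | ∃ p : Supp A, f = MvPolynomial.X p ^ 2} ∪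
    {f | ∃ T : Finset (Supp A), ¬ IsIsolatedSubset A T ∧ f = ∏ p ∈ T, MvPolynomial.X p})

open MvPolynomial in
theorem prod_notMem_isolationIdeal_iff (m n : ℕ) (A : Matrix (Fin m) (Fin n) Bool)
    (k : Type*) [Field k] (T : Finset (Supp A)) :
    (∏ p ∈ T, MvPolynomial.X p : MvPolynomial (Supp A) k) ∉ isolationIdeal k A ↔
      IsIsolatedSubset A T := by
  classical
  set S : Set (Supp A →₀ ℕ) :=
    {d | ∃ p : Supp A, d = Finsupp.single p 2} ∪
      {d | ∃ T' : Finset (Supp A), ¬ IsIsolatedSubset A T' ∧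
        d = ∑ p ∈ T', Finsupp.single p 1} with hS
  have hprod : ∀ T' : Finset (Supp A),
      (∏ p ∈ T', MvPolynomial.X p : MvPolynomial (Supp A) k) =
        monomial (∑ p ∈ T', Finsupp.single p 1) 1 := by
    intro T'
    rw [monomial_sum_one]
    exact Finset.prod_congr rfl fun p _ => rfl
  have hideal : isolationIdeal k A =
      Ideal.span ((fun s => monomial s (1 : k)) '' S) := by
    unfold isolationIdeal
    congr 1
    ext f
    constructor
    · rintro (⟨p, rfl⟩ | ⟨T', hT', rfl⟩)
      · exact ⟨Finsupp.single p 2, Or.inl ⟨p, rfl⟩, (X_pow_eq_monomial (n := p) (e := 2)).symm⟩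
      · exact ⟨_, Or.inr ⟨T', hT', rfl⟩, (hprod T').symm⟩
    · rintro ⟨d, (⟨p, rfl⟩ | ⟨T', hT', rfl⟩), rfl⟩
      · exact Or.inl ⟨p, (X_pow_eq_monomial (n := p) (e := 2)).symm⟩
      · exact Or.inr ⟨T', hT', (hprod T').symm⟩
  set d : Supp A →₀ ℕ := ∑ p ∈ T, Finsupp.single p 1 with hd
  have hdapp : ∀ q : Supp A, d q = if q ∈ T then 1 else 0 := by
    intro q
    rw [hd, Finsupp.finset_sum_apply]
    simp [Finsupp.single_apply, eq_comm]
  have hsupp : (monomial d (1 : k)).support = {d} :=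
    by rw [support_monomial, if_neg one_ne_zero]
  rw [hideal, hprod T, mem_ideal_span_monomial_image, hsupp]
  simp only [Finset.mem_singleton, forall_eq]
  rw [not_exists]
  constructor
  · intro h p hp q hq hpq
    by_contra hnot
    refine h d ?_
    refine ⟨Or.inr ⟨T, fun hiso => ?_, rfl⟩, le_refl d⟩
    exact hnot (hiso p hp q hq hpq)
  · intro hiso s hs
    rcases hs with ⟨(⟨p, rfl⟩ | ⟨T', hT', rfl⟩), hle⟩
    · have := hle p
      rw [Finsupp.single_apply, if_pos rfl, hdapp p] at this
      split_ifs at this <;> omega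
    · apply hT'
      intro p hp q hq hpq
      have hsub : T' ⊆ T := by
        intro p hp
        have := hle p
        rw [Finsupp.finset_sum_apply] at this
        have h1 : (∑ q ∈ T', Finsupp.single q 1 p) = 1 := by
          rw [Finset.sum_eq_single p]
          · simp
          · intro b _ hb; simp [Finsupp.single_apply, hb]
          · intro h; exact absurd hp h
        rw [h1, hdapp p] at this
        split_ifs at this with h
        · exact h
        · omega
      exact hiso p (hsub hp) q (hsub hq) hpq
end

section
/- Let A be an m×n Boolean matrix and k a field. For every natural number d, there exists a monomial of degree d in R[A] not belonging to the isolation ideal J_A if and only if d ≤ ι(A). Consequently the top degree of the quotient ring R[A]/J_A, i.e. the greatest d with a nonzero degree-d homogeneous component, equals the isolation number ι(A). -/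
/-- The isolation number of `A`: the maximum cardinality of an isolated set. -/
noncomputable def isolationNumber {m n : ℕ} (A : Matrix (Fin m) (Fin n) Bool) : ℕ :=
  sSup {s | ∃ T : Finset (Fin m × Fin n), IsIsolatedSet A T ∧ T.card = s}

section Aux

open MvPolynomial

variable {m n : ℕ} (A : Matrix (Fin m) (Fin n) Bool) (k : Type*) [Field k]

/-- The exponent sets generating the isolation ideal. -/
def genSet : Set (Supp A →₀ ℕ) :=
  {σ | ∃ p : Supp A, σ = Finsupp.single p 2} ∪
    {σ | ∃ T : Finset (Supp A), ¬ IsIsolatedSubset A T ∧ σ = ∑ p ∈ T, Finsupp.single p 1}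

lemma isolationIdeal_eq_span :
    isolationIdeal k A = Ideal.span ((fun s => monomial s (1 : k)) '' genSet A) := by
  unfold isolationIdeal genSet
  congr 1
  rw [Set.image_union]
  congr 1
  · ext f
    simp only [Set.mem_setOf_eq, Set.mem_image]
    constructor
    · rintro ⟨p, rfl⟩; exact ⟨Finsupp.single p 2, ⟨p, rfl⟩, (X_pow_eq_monomial).symm⟩
    · rintro ⟨σ, ⟨p, rfl⟩, rfl⟩; exact ⟨p, X_pow_eq_monomial.symm⟩
  · ext f
    simp only [Set.mem_setOf_eq, Set.mem_image]
    constructor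
    · rintro ⟨T, hT, rfl⟩
      refine ⟨∑ p ∈ T, Finsupp.single p 1, ⟨T, hT, rfl⟩, ?_⟩
      rw [monomial_sum_one]
      exact Finset.prod_congr rfl fun p _ => by rw [X_pow_eq_monomial.symm, pow_one]
    · rintro ⟨σ, ⟨T, hT, rfl⟩, rfl⟩
      refine ⟨T, hT, ?_⟩
      rw [monomial_sum_one]
      exact (Finset.prod_congr rfl fun p _ => by rw [X_pow_eq_monomial.symm, pow_one]).symm

lemma sum_single_apply (T : Finset (Supp A)) (q : Supp A) :
    (∑ p ∈ T, Finsupp.single p (1 : ℕ)) q = if q ∈ T then 1 else 0 := by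
  classical
  rw [Finset.sum_apply']
  simp [Finsupp.single_apply, Finset.sum_ite_eq' T q (fun _ => 1)]

lemma isolatedSubset_mono {S T : Finset (Supp A)} (h : IsIsolatedSubset A S) (hTS : T ⊆ S) :
    IsIsolatedSubset A T :=
  fun p hp q hq hpq => h p (hTS hp) q (hTS hq) hpq

lemma monomial_not_mem_iff (σ : Supp A →₀ ℕ) :
    monomial σ (1 : k) ∉ isolationIdeal k A ↔
      (∀ p, σ p ≤ 1) ∧ IsIsolatedSubset A σ.support := by
  classical
  rw [isolationIdeal_eq_span, mem_ideal_span_monomial_image]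
  rw [support_monomial, if_neg (one_ne_zero)]
  simp only [Finset.mem_singleton, forall_eq]
  constructor
  · intro h
    push_neg at h
    constructor
    · intro p
      by_contra hp
      exact absurd (Finsupp.single_le_iff.mpr (by omega)) (h _ (Or.inl ⟨p, rfl⟩))
    · intro p hp q hq hpq
      by_contra hno
      refine absurd ?_ (h _ (Or.inr ⟨{p, q}, ?_, rfl⟩))
      · intro r
        rw [sum_single_apply]
        split
        · next hr =>
          rcases Finset.mem_insert.mp hr with rfl | hr
          · exact Nat.one_le_iff_ne_zero.mpr (Finsupp.mem_support_iff.mp hp)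
          · rw [Finset.mem_singleton.mp hr]
            exact Nat.one_le_iff_ne_zero.mpr (Finsupp.mem_support_iff.mp hq)
        · exact Nat.zero_le _
      · intro hiso
        exact hno <| hiso p (by simp) q (by simp) hpq
  · rintro ⟨h1, h2⟩ ⟨s, hs, hle⟩
    rcases hs with ⟨p, rfl⟩ | ⟨T, hT, rfl⟩
    · have := Finsupp.single_le_iff.mp hle
      have := h1 p
      omega
    · refine hT (isolatedSubset_mono A h2 ?_)
      intro p hp
      have := hle p
      rw [sum_single_apply, if_pos hp] at this
      exact Finsupp.mem_support_iff.mpr (by omega)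

lemma exists_monomial_iff (d : ℕ) :
    (∃ σ : Supp A →₀ ℕ, (σ.sum fun _ e => e) = d ∧
        (MvPolynomial.monomial σ (1 : k)) ∉ isolationIdeal k A) ↔
      ∃ T : Finset (Supp A), IsIsolatedSubset A T ∧ T.card = d := by
  classical
  constructor
  · rintro ⟨σ, hd, hσ⟩
    rw [monomial_not_mem_iff] at hσ
    refine ⟨σ.support, hσ.2, ?_⟩
    rw [← hd, Finsupp.sum]
    rw [Finset.card_eq_sum_ones]
    refine (Finset.sum_congr rfl fun p hp => ?_).symm
    have := hσ.1 p
    have := Finsupp.mem_support_iff.mp hp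
    omega
  · rintro ⟨T, hT, rfl⟩
    refine ⟨∑ p ∈ T, Finsupp.single p 1, ?_, ?_⟩
    · rw [Finsupp.sum]
      have hsupp : (∑ p ∈ T, Finsupp.single p (1 : ℕ)).support = T := by
        ext q
        rw [Finsupp.mem_support_iff, sum_single_apply]
        split <;> simp_all
      rw [hsupp, Finset.card_eq_sum_ones]
      exact Finset.sum_congr rfl fun p hp => by rw [sum_single_apply, if_pos hp]
    · rw [monomial_not_mem_iff]
      have hsupp : (∑ p ∈ T, Finsupp.single p (1 : ℕ)).support = T := by
        ext q
        rw [Finsupp.mem_support_iff, sum_single_apply]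
        split <;> simp_all
      refine ⟨fun p => ?_, by rw [hsupp]; exact hT⟩
      rw [sum_single_apply]; split <;> omega

lemma bridge (d : ℕ) :
    (∃ T : Finset (Supp A), IsIsolatedSubset A T ∧ T.card = d) ↔
      ∃ T : Finset (Fin m × Fin n), IsIsolatedSet A T ∧ T.card = d := by
  classical
  constructor
  · rintro ⟨T, hT, rfl⟩
    refine ⟨T.image Subtype.val, ⟨?_, ?_⟩, Finset.card_image_of_injective T Subtype.val_injective⟩
    · rintro p hp
      obtain ⟨p', _, rfl⟩ := Finset.mem_image.mp hp
      exact p'.2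
    · rintro p hp q hq hpq
      obtain ⟨p', hp', rfl⟩ := Finset.mem_image.mp hp
      obtain ⟨q', hq', rfl⟩ := Finset.mem_image.mp hq
      exact hT p' hp' q' hq' (fun h => hpq (congrArg Subtype.val h))
  · rintro ⟨T, ⟨h1, h2⟩, rfl⟩
    refine ⟨T.subtype (fun p => A p.1 p.2 = true), ?_, ?_⟩
    · rintro p hp q hq hpq
      rw [Finset.mem_subtype] at hp hq
      exact h2 p.1 hp q.1 hq (fun h => hpq (Subtype.ext h))
    · rw [Finset.card_subtype, Finset.filter_true_of_mem h1]

lemma isolationNumber_spec :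
    (∃ T : Finset (Fin m × Fin n), IsIsolatedSet A T ∧ T.card = isolationNumber A) ∧
      ∀ d, (∃ T : Finset (Fin m × Fin n), IsIsolatedSet A T ∧ T.card = d) →
        d ≤ isolationNumber A := by
  have hne : ({s | ∃ T : Finset (Fin m × Fin n), IsIsolatedSet A T ∧ T.card = s}).Nonempty :=
    ⟨0, ∅, ⟨by simp, by simp⟩, by simp⟩
  have hbdd : BddAbove {s | ∃ T : Finset (Fin m × Fin n), IsIsolatedSet A T ∧ T.card = s} := by
    refine ⟨Fintype.card (Fin m × Fin n), ?_⟩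
    rintro s ⟨T, _, rfl⟩
    exact Finset.card_le_univ T
  exact ⟨Nat.sSup_mem hne hbdd, fun d hd => le_csSup hbdd hd⟩

end Aux

/-- There is a monomial of degree `d` outside `J_A` iff `d ≤ ι(A)`; consequently the
top degree of `R[A]/J_A` (the greatest `d` with a nonzero degree-`d` homogeneous
component of the quotient) equals the isolation number `ι(A)`. -/
theorem topDegree_isolationIdeal_eq_isolationNumber (m n : ℕ)
    (A : Matrix (Fin m) (Fin n) Bool) (k : Type*) [Field k] :
    (∀ d : ℕ, (∃ σ : Supp A →₀ ℕ, (σ.sum fun _ e => e) = d ∧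
        (MvPolynomial.monomial σ (1 : k)) ∉ isolationIdeal k A) ↔ d ≤ isolationNumber A) ∧
    sSup {d : ℕ | ∃ f : MvPolynomial (Supp A) k,
        f.IsHomogeneous d ∧ f ∉ isolationIdeal k A} = isolationNumber A := by
  classical
  obtain ⟨hmax, hub⟩ := isolationNumber_spec A
  have part1 : ∀ d : ℕ, (∃ σ : Supp A →₀ ℕ, (σ.sum fun _ e => e) = d ∧
      (MvPolynomial.monomial σ (1 : k)) ∉ isolationIdeal k A) ↔ d ≤ isolationNumber A := by
    intro d
    rw [exists_monomial_iff, bridge]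
    constructor
    · exact hub d
    · intro hd
      obtain ⟨Tmax, hTmax, hcard⟩ := (bridge A (isolationNumber A)).mpr hmax
      obtain ⟨T, hsub, hT⟩ := Finset.exists_subset_card_eq (hcard ▸ hd)
      exact (bridge A d).mp ⟨T, isolatedSubset_mono A hTmax hsub, hT⟩
  refine ⟨part1, ?_⟩
  have hset : {d : ℕ | ∃ f : MvPolynomial (Supp A) k,
      f.IsHomogeneous d ∧ f ∉ isolationIdeal k A} = Set.Iic (isolationNumber A) := by
    ext d
    simp only [Set.mem_setOf_eq, Set.mem_Iic]
    constructor
    · rintro ⟨f, hf, hfJ⟩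
      have : ∃ σ ∈ f.support, MvPolynomial.monomial σ (1 : k) ∉ isolationIdeal k A := by
        by_contra h
        push_neg at h
        apply hfJ
        rw [f.as_sum]
        refine Ideal.sum_mem _ fun σ hσ => ?_
        have : MvPolynomial.monomial σ (MvPolynomial.coeff σ f) =
            MvPolynomial.C (MvPolynomial.coeff σ f) * MvPolynomial.monomial σ (1 : k) := by
          rw [MvPolynomial.C_mul_monomial, mul_one]
        rw [this]
        exact Ideal.mul_mem_left _ _ (h σ hσ)
      obtain ⟨σ, hσ, hσJ⟩ := this
      refine (part1 d).mp ⟨σ, ?_, hσJ⟩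
      have := hf (MvPolynomial.mem_support_iff.mp hσ)
      simpa [Finsupp.weight, Finsupp.linearCombination, Finsupp.sum] using this
    · intro hd
      obtain ⟨σ, hσd, hσJ⟩ := (part1 d).mpr hd
      refine ⟨MvPolynomial.monomial σ (1 : k), ?_, hσJ⟩
      apply MvPolynomial.isHomogeneous_monomial
      rw [Finsupp.degree, ← hσd, Finsupp.sum]
      rfl
  rw [hset, csSup_Iic]
end

section
/- Let A be an m×n Boolean matrix that is solid block diagonal with r blocks, i.e. there exist surjective maps ρ : Fin m → Fin r and γ : Fin n → Fin r such that A i j = true ↔ ρ i = γ j. Then the Boolean rank of A equals r: brank(A) = r. -/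
theorem brank_solidBlockDiagonal (m n r : ℕ) (A : Matrix (Fin m) (Fin n) Bool)
    (ρ : Fin m → Fin r) (γ : Fin n → Fin r)
    (hρ : Function.Surjective ρ) (hγ : Function.Surjective γ)
    (hA : ∀ i j, A i j = true ↔ ρ i = γ j) :
    brank A = r := by
  have hmem : r ∈ {s | BoolFactorization A s} := by
    refine ⟨fun i ℓ => decide (ρ i = ℓ), fun ℓ j => decide (ℓ = γ j), fun i j => ?_⟩
    rw [hA]
    constructor
    · intro h; exact ⟨γ j, by simp [h], by simp⟩
    · rintro ⟨ℓ, h1, h2⟩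
      simp only [decide_eq_true_eq] at h1 h2
      exact h1.trans h2
  have hlb : ∀ s ∈ {s | BoolFactorization A s}, r ≤ s := by
    rintro s ⟨V, H, hVH⟩
    choose iOf hiOf using hρ
    choose jOf hjOf using hγ
    have key : ∀ k : Fin r, ∃ ℓ : Fin s, V (iOf k) ℓ = true ∧ H ℓ (jOf k) = true := by
      intro k
      exact (hVH (iOf k) (jOf k)).mp ((hA _ _).mpr (by rw [hiOf, hjOf]))
    choose f hf1 hf2 using key
    have hinj : Function.Injective f := by
      intro a b hab
      have : A (iOf a) (jOf b) = true :=
        (hVH _ _).mpr ⟨f a, hf1 a, hab ▸ hf2 b⟩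
      have := (hA _ _).mp this
      rwa [hiOf, hjOf] at this
    simpa using Fintype.card_le_of_injective f hinj
  exact le_antisymm (Nat.sInf_le hmem) (le_csInf ⟨r, hmem⟩ hlb)
end

section
/- Let A be an m×n Boolean matrix that is solid block diagonal with r blocks, i.e. there exist surjective maps ρ : Fin m → Fin r and γ : Fin n → Fin r such that A i j = true ↔ ρ i = γ j. Then the isolation number of A equals r: ι(A) = r. -/
theorem isolationNumber_solidBlockDiagonal (m n r : ℕ) (A : Matrix (Fin m) (Fin n) Bool)
    (ρ : Fin m → Fin r) (γ : Fin n → Fin r)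
    (hρ : Function.Surjective ρ) (hγ : Function.Surjective γ)
    (hA : ∀ i j, A i j = true ↔ ρ i = γ j) :
    isolationNumber A = r := by
  have hub : ∀ s ∈ {s | ∃ T : Finset (Fin m × Fin n), IsIsolatedSet A T ∧ T.card = s},
      s ≤ r := by
    rintro s ⟨T, ⟨hT1, hT2⟩, rfl⟩
    have hinj : Set.InjOn (fun p : Fin m × Fin n => ρ p.1) T := by
      intro p hp q hq hpq
      by_contra hne
      obtain ⟨_, _, h3⟩ := hT2 p hp q hq hne
      apply h3
      have hp1 := hT1 p hp
      have hq1 := hT1 q hq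
      rw [hA] at hp1 hq1
      exact ⟨(hA _ _).mpr (hpq.trans hq1), (hA _ _).mpr (hpq.symm.trans hp1)⟩
    calc T.card = (T.image (fun p => ρ p.1)).card := (Finset.card_image_of_injOn hinj).symm
      _ ≤ Fintype.card (Fin r) := Finset.card_le_univ _
      _ = r := Fintype.card_fin r
  apply le_antisymm
  · exact csSup_le' hub
  · apply le_csSup ⟨r, hub⟩
    choose f hf using hρ
    choose g hg using hγ
    refine ⟨Finset.univ.image (fun k => (f k, g k)), ⟨?_, ?_⟩, ?_⟩
    · rintro p hp
      simp only [Finset.mem_image, Finset.mem_univ, true_and] at hp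
      obtain ⟨k, rfl⟩ := hp
      rw [hA, hf, hg]
    · rintro p hp q hq hne
      simp only [Finset.mem_image, Finset.mem_univ, true_and] at hp hq
      obtain ⟨k, rfl⟩ := hp
      obtain ⟨l, rfl⟩ := hq
      have hkl : k ≠ l := by rintro rfl; exact hne rfl
      refine ⟨by rw [hA, hf, hg], by rw [hA, hf, hg], ?_⟩
      rintro ⟨h1, _⟩
      rw [hA, hf, hg] at h1
      exact hkl h1
    · rw [Finset.card_image_of_injective _ ?_, Finset.card_univ, Fintype.card_fin]
      intro a b hab
      have : ρ (f a) = ρ (f b) := by rw [Prod.mk.injEq] at hab; rw [hab.1]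
      rwa [hf, hf] at this
end

section
/- Let A be an m×n Boolean matrix whose support is a union of r all-ones blocks: there are families of sets R_c ⊆ Fin m and C_c ⊆ Fin n for c : Fin r with A i j = true ↔ ∃ c, i ∈ R_c ∧ j ∈ C_c. Suppose A is row separated (for every c there exists i ∈ R_c with i ∉ R_d for all d ≠ c) and column separated (for every c there exists j ∈ C_c with j ∉ C_d for all d ≠ c). Then the Boolean rank of A equals r: brank(A) = r. -/
theorem brank_overlappingBlocks (m n r : ℕ) (A : Matrix (Fin m) (Fin n) Bool)
    (R : Fin r → Set (Fin m)) (C : Fin r → Set (Fin n))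
    (hA : ∀ i j, A i j = true ↔ ∃ c : Fin r, i ∈ R c ∧ j ∈ C c)
    (hrow : ∀ c : Fin r, ∃ i ∈ R c, ∀ d : Fin r, d ≠ c → i ∉ R d)
    (hcol : ∀ c : Fin r, ∃ j ∈ C c, ∀ d : Fin r, d ≠ c → j ∉ C d) :
    brank A = r := by
  classical
  have hmem : BoolFactorization A r := by
    refine ⟨fun i c => decide (i ∈ R c), fun c j => decide (j ∈ C c), fun i j => ?_⟩
    rw [hA]
    simp
  have hle : ∀ s ∈ {r' | BoolFactorization A r'}, r ≤ s := by
    rintro s ⟨V, H, hVH⟩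
    choose ri hri hri' using hrow
    choose cj hcj hcj' using hcol
    have key : ∀ c : Fin r, ∃ ℓ : Fin s, V (ri c) ℓ = true ∧ H ℓ (cj c) = true := by
      intro c
      rw [← hVH, hA]
      exact ⟨c, hri c, hcj c⟩
    choose f hf1 hf2 using key
    have hinj : Function.Injective f := by
      intro c c' hcc'
      by_contra hne
      have : A (ri c) (cj c') = true := (hVH _ _).2 ⟨f c, hf1 c, hcc' ▸ hf2 c'⟩
      obtain ⟨d, hd1, hd2⟩ := (hA _ _).1 this
      rcases eq_or_ne d c with rfl | h
      · exact hcj' c' d hne hd2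
      · exact hri' c d h hd1
    simpa using Fintype.card_le_of_injective f hinj
  exact le_antisymm (Nat.sInf_le hmem) (le_csInf ⟨r, hmem⟩ hle)
end

section
/- Let A be an m×n Boolean matrix whose support is a union of r all-ones blocks: there are families of sets R_c ⊆ Fin m and C_c ⊆ Fin n for c : Fin r with A i j = true ↔ ∃ c, i ∈ R_c ∧ j ∈ C_c. Suppose A is row separated (for every c there exists i ∈ R_c with i ∉ R_d for all d ≠ c) and column separated (for every c there exists j ∈ C_c with j ∉ C_d for all d ≠ c). Then the isolation number of A equals r: ι(A) = r. -/
theorem isolationNumber_overlappingBlocks (m n r : ℕ) (A : Matrix (Fin m) (Fin n) Bool)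
    (R : Fin r → Set (Fin m)) (C : Fin r → Set (Fin n))
    (hA : ∀ i j, A i j = true ↔ ∃ c : Fin r, i ∈ R c ∧ j ∈ C c)
    (hrow : ∀ c : Fin r, ∃ i ∈ R c, ∀ d : Fin r, d ≠ c → i ∉ R d)
    (hcol : ∀ c : Fin r, ∃ j ∈ C c, ∀ d : Fin r, d ≠ c → j ∉ C d) :
    isolationNumber A = r := by
  classical
  choose i hiR hiSep using hrow
  choose j hjC hjSep using hcol
  -- key: A (i c) (j d) = true → c = d
  have key : ∀ c d : Fin r, A (i c) (j d) = true → c = d := by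
    intro c d h
    obtain ⟨e, he1, he2⟩ := (hA _ _).1 h
    have hc : e = c := by by_contra h'; exact hiSep c e h' he1
    have hd : e = d := by by_contra h'; exact hjSep d e h' he2
    exact hc.symm.trans hd
  -- the witness isolated set of size r
  set T₀ : Finset (Fin m × Fin n) :=
    Finset.image (fun c => (i c, j c)) Finset.univ with hT₀
  have hval : ∀ c : Fin r, A (i c) (j c) = true := fun c =>
    (hA _ _).2 ⟨c, hiR c, hjC c⟩
  have hinj0 : Function.Injective (fun c : Fin r => (i c, j c)) := by
    intro c d h
    have h1 : i c = i d := congrArg Prod.fst h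
    apply key c d
    apply (hA _ _).2
    exact ⟨d, by rw [h1]; exact hiR d, hjC d⟩
  have hiso : IsIsolatedSet A T₀ := by
    constructor
    · intro p hp
      obtain ⟨c, _, hc⟩ := Finset.mem_image.1 hp
      rw [← hc]; exact hval c
    · intro p hp q hq hpq
      obtain ⟨c, _, hc⟩ := Finset.mem_image.1 hp
      obtain ⟨d, _, hd⟩ := Finset.mem_image.1 hq
      subst hc; subst hd
      have hcd : c ≠ d := fun h => hpq (by rw [h])
      refine ⟨hval c, hval d, ?_⟩
      rintro ⟨h1, h2⟩
      exact hcd (key c d h1)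
  have hcard : T₀.card = r := by
    rw [hT₀, Finset.card_image_of_injective _ hinj0, Finset.card_univ, Fintype.card_fin]
  -- upper bound
  have hub : ∀ T : Finset (Fin m × Fin n), IsIsolatedSet A T → T.card ≤ r := by
    intro T hT
    have hex : ∀ p : {x // x ∈ T}, ∃ c, (p : Fin m × Fin n).1 ∈ R c ∧
        (p : Fin m × Fin n).2 ∈ C c := fun p => (hA _ _).1 (hT.1 p p.2)
    choose f hf1 hf2 using hex
    have hinj : Function.Injective f := by
      intro p q h
      by_contra hne
      have hpq : (p : Fin m × Fin n) ≠ q := fun hh => hne (Subtype.ext hh)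
      apply (hT.2 p p.2 q q.2 hpq).2.2
      constructor
      · exact (hA _ _).2 ⟨f p, hf1 p, by rw [h]; exact hf2 q⟩
      · exact (hA _ _).2 ⟨f p, by rw [h]; exact hf1 q, hf2 p⟩
    calc T.card = Fintype.card {x // x ∈ T} := (Fintype.card_coe T).symm
      _ ≤ Fintype.card (Fin r) := Fintype.card_le_of_injective f hinj
      _ = r := Fintype.card_fin r
  have hmem : r ∈ {s | ∃ T : Finset (Fin m × Fin n), IsIsolatedSet A T ∧ T.card = s} :=
    ⟨T₀, hiso, hcard⟩
  have hbdd : ∀ s ∈ {s | ∃ T : Finset (Fin m × Fin n), IsIsolatedSet A T ∧ T.card = s},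
      s ≤ r := by
    rintro s ⟨T, hT, rfl⟩
    exact hub T hT
  refine le_antisymm (csSup_le ⟨r, hmem⟩ hbdd) (le_csSup ⟨r, hbdd⟩ hmem)
end

section
/- Let n ≥ 3 and let J_n be the n×n identity complement Boolean matrix, defined by J_n i j = true ↔ i ≠ j. Then the isolation number of J_n equals 3: ι(J_n) = 3. -/
/-- The `n × n` identity complement matrix: ones everywhere off the diagonal. -/
def identityComplement (n : ℕ) : Matrix (Fin n) (Fin n) Bool :=
  Matrix.of fun i j => decide (i ≠ j)

lemma identityComplement_eq {n : ℕ} (i j : Fin n) :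
    identityComplement n i j = true ↔ i ≠ j := by
  simp [identityComplement]

lemma isolated_card_le {n : ℕ} (T : Finset (Fin n × Fin n))
    (hT : IsIsolatedSet (identityComplement n) T) : T.card ≤ 3 := by
  by_contra h
  push_neg at h
  obtain ⟨hone, hpair⟩ := hT
  have hpos : 0 < T.card := by omega
  obtain ⟨e1, he1⟩ := Finset.card_pos.mp hpos
  set a := e1.1 with ha
  set b := e1.2 with hb
  have hab : a ≠ b := (identityComplement_eq _ _).mp (hone e1 he1)
  set S := T.erase e1 with hS
  have hScard : 3 ≤ S.card := by
    have hc : S.card = T.card - 1 := Finset.card_erase_of_mem he1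
    omega
  -- every element of S has head b or tail a
  have key : ∀ e ∈ S, e.1 = b ∨ e.2 = a := by
    intro e heS
    have heT : e ∈ T := Finset.mem_of_mem_erase heS
    have hne : e1 ≠ e := fun hh => (Finset.ne_of_mem_erase heS) hh.symm
    obtain ⟨_, _, h3⟩ := hpair e1 he1 e heT hne
    by_contra hc
    push_neg at hc
    exact h3 ⟨(identityComplement_eq _ _).mpr (fun hh => hc.2 hh.symm),
      (identityComplement_eq _ _).mpr (fun hh => hc.1 hh)⟩
  set S1 := S.filter (fun e => e.1 = b) with hS1
  set S2 := S.filter (fun e => e.2 = a) with hS2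
  have hsub : S ⊆ S1 ∪ S2 := by
    intro e he
    rcases key e he with h | h
    · exact Finset.mem_union_left _ (Finset.mem_filter.mpr ⟨he, h⟩)
    · exact Finset.mem_union_right _ (Finset.mem_filter.mpr ⟨he, h⟩)
  have hc1 : S1.card ≤ 1 := by
    apply Finset.card_le_one.mpr
    intro e he f hf
    obtain ⟨heS, he1b⟩ := Finset.mem_filter.mp he
    obtain ⟨hfS, hf1b⟩ := Finset.mem_filter.mp hf
    by_contra hef
    obtain ⟨_, _, h3⟩ := hpair e (Finset.mem_of_mem_erase heS) f (Finset.mem_of_mem_erase hfS) hef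
    have hee : e.1 ≠ e.2 := (identityComplement_eq _ _).mp (hone e (Finset.mem_of_mem_erase heS))
    have hff : f.1 ≠ f.2 := (identityComplement_eq _ _).mp (hone f (Finset.mem_of_mem_erase hfS))
    exact h3 ⟨(identityComplement_eq _ _).mpr (by rw [he1b]; rw [hf1b] at hff; exact hff),
      (identityComplement_eq _ _).mpr (by rw [hf1b]; rw [he1b] at hee; exact hee)⟩
  have hc2 : S2.card ≤ 1 := by
    apply Finset.card_le_one.mpr
    intro e he f hf
    obtain ⟨heS, he2a⟩ := Finset.mem_filter.mp he
    obtain ⟨hfS, hf2a⟩ := Finset.mem_filter.mp hf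
    by_contra hef
    obtain ⟨_, _, h3⟩ := hpair e (Finset.mem_of_mem_erase heS) f (Finset.mem_of_mem_erase hfS) hef
    have hee : e.1 ≠ e.2 := (identityComplement_eq _ _).mp (hone e (Finset.mem_of_mem_erase heS))
    have hff : f.1 ≠ f.2 := (identityComplement_eq _ _).mp (hone f (Finset.mem_of_mem_erase hfS))
    exact h3 ⟨(identityComplement_eq _ _).mpr (by rw [hf2a]; rw [he2a] at hee; exact hee),
      (identityComplement_eq _ _).mpr (by rw [he2a]; rw [hf2a] at hff; exact hff)⟩
  have := Finset.card_le_card hsub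
  have := Finset.card_union_le S1 S2
  omega

theorem isolationNumber_identityComplement (n : ℕ) (hn : 3 ≤ n) :
    isolationNumber (identityComplement n) = 3 := by
  have h0 : (0 : ℕ) < n := by omega
  have h1 : (1 : ℕ) < n := by omega
  have h2 : (2 : ℕ) < n := by omega
  set x0 : Fin n := ⟨0, h0⟩
  set x1 : Fin n := ⟨1, h1⟩
  set x2 : Fin n := ⟨2, h2⟩
  set T0 : Finset (Fin n × Fin n) := {(x0, x1), (x1, x2), (x2, x0)} with hT0
  have hmem : ∀ p, p ∈ T0 ↔ p = (x0, x1) ∨ p = (x1, x2) ∨ p = (x2, x0) := by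
    intro p; simp [hT0]
  have hiso : IsIsolatedSet (identityComplement n) T0 := by
    constructor
    · intro p hp
      rcases (hmem p).mp hp with h | h | h <;>
        (subst h; exact (identityComplement_eq _ _).mpr (by simp [x0, x1, x2, Fin.ext_iff]))
    · intro p hp q hq hpq
      rcases (hmem p).mp hp with h | h | h <;> rcases (hmem q).mp hq with h' | h' | h' <;>
        subst h <;> subst h' <;> first
        | exact absurd rfl hpq
        | (refine ⟨(identityComplement_eq _ _).mpr (by simp [x0, x1, x2, Fin.ext_iff]),
            (identityComplement_eq _ _).mpr (by simp [x0, x1, x2, Fin.ext_iff]), ?_⟩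
           rintro ⟨hh1, hh2⟩
           rw [identityComplement_eq] at hh1 hh2
           simp [x0, x1, x2, Fin.ext_iff] at hh1 hh2)
  have hcard : T0.card = 3 := by
    rw [hT0]
    rw [Finset.card_insert_of_notMem (by simp [Prod.ext_iff, Fin.ext_iff]),
        Finset.card_insert_of_notMem (by simp [Prod.ext_iff, Fin.ext_iff])]
    rfl
  have hmem3 : 3 ∈ {s | ∃ T : Finset (Fin n × Fin n),
      IsIsolatedSet (identityComplement n) T ∧ T.card = s} := ⟨T0, hiso, hcard⟩
  apply le_antisymm
  · apply csSup_le ⟨3, hmem3⟩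
    rintro s ⟨T, hT, rfl⟩
    exact isolated_card_le T hT
  · exact le_csSup ⟨3, by rintro s ⟨T, hT, rfl⟩; exact isolated_card_le T hT⟩ hmem3
end
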